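/- Let n ≥ 1, let v : 𝔹ₙ → ℂ be of class C¹ in the real sense, and let z, ζ ∈ 𝔹ₙ. Then ∑_{j=1}^n (∂̄_j v)(ζ)·conj(ζ_j) = −(1/(1−⟨z,ζ⟩))·∑_{j=1}^n (∂̄_j (v ∘ φ_z))(φ_z(ζ))·conj( z_j − (φ_z(ζ))_j ). -/

import Mathlib

open MeasureTheory
open scoped Classical

noncomputable instance {n : ℕ} : InnerProductSpace ℝ (EuclideanSpace ℂ (Fin n)) :=
  InnerProductSpace.complexToReal

/-- The Hermitian inner product `⟨z,w⟩ = ∑ j, z j * conj (w j)` used in the paper. -/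
noncomputable def hin {n : ℕ} (z w : EuclideanSpace ℂ (Fin n)) : ℂ :=
  ∑ j, z j * (starRingEnd ℂ) (w j)

/-- The orthogonal projection of `w` onto the complex line `ℂ z`. -/
noncomputable def projLine {n : ℕ} (z w : EuclideanSpace ℂ (Fin n)) :
    EuclideanSpace ℂ (Fin n) :=
  (hin w z / ((‖z‖ : ℂ) ^ 2)) • z

/-- The Möbius transform `φ_z` of the unit ball `𝔹ₙ`. -/
noncomputable def mobius {n : ℕ} (z w : EuclideanSpace ℂ (Fin n)) :
    EuclideanSpace ℂ (Fin n) :=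
  if z = 0 then -w
  else
    (1 - hin w z)⁻¹ •
      (z - projLine z w - ((Real.sqrt (1 - ‖z‖ ^ 2) : ℝ) : ℂ) • (w - projLine z w))

/-- The `j`-th Wirtinger derivative `∂̄_j v(z) = ½(∂v/∂x_j + i ∂v/∂y_j)`. -/
noncomputable def wdbar {n : ℕ} (v : EuclideanSpace ℂ (Fin n) → ℂ) (j : Fin n)
    (z : EuclideanSpace ℂ (Fin n)) : ℂ :=
  (1 / 2 : ℂ) * (fderiv ℝ v z (EuclideanSpace.single j 1) +
    Complex.I * fderiv ℝ v z (EuclideanSpace.single j Complex.I))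

section Aux

variable {n : ℕ}

local notation "E" => EuclideanSpace ℂ (Fin n)

lemma hin_eq_inner (z w : E) : hin z w = @inner ℂ _ _ w z := by
  simp [hin, PiLp.inner_apply, mul_comm]

lemma hin_self (z : E) : hin z z = ((‖z‖ : ℝ) : ℂ) ^ 2 := by
  rw [hin_eq_inner]; exact inner_self_eq_norm_sq_to_K z

lemma conj_hin (z w : E) : (starRingEnd ℂ) (hin z w) = hin w z := by
  rw [hin_eq_inner, hin_eq_inner, inner_conj_symm]

lemma hin_smul_left (c : ℂ) (x z : E) : hin (c • x) z = c * hin x z := by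
  rw [hin_eq_inner, hin_eq_inner, inner_smul_right]

lemma hin_sub_left (x y z : E) : hin (x - y) z = hin x z - hin y z := by
  rw [hin_eq_inner, hin_eq_inner, hin_eq_inner, inner_sub_right]

lemma hin_smul_right (c : ℂ) (x z : E) : hin x (c • z) = (starRingEnd ℂ) c * hin x z := by
  rw [hin_eq_inner, hin_eq_inner, inner_smul_left]

lemma hin_sub_right (x z w : E) : hin x (z - w) = hin x z - hin x w := by
  rw [hin_eq_inner, hin_eq_inner, hin_eq_inner, inner_sub_left]

lemma hin_zero_right (x : E) : hin x 0 = 0 := by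
  rw [hin_eq_inner]; exact inner_zero_left x

lemma norm_hin_le (z w : E) : ‖hin z w‖ ≤ ‖z‖ * ‖w‖ := by
  rw [hin_eq_inner]
  simpa [mul_comm] using norm_inner_le_norm (𝕜 := ℂ) w z

lemma one_sub_hin_ne_zero {z w : E} (hz : ‖z‖ < 1) (hw : ‖w‖ < 1) : 1 - hin z w ≠ 0 := by
  have h := norm_hin_le z w
  have hlt : ‖hin z w‖ < 1 := by
    calc ‖hin z w‖ ≤ ‖z‖ * ‖w‖ := h
    _ < 1 := by nlinarith [norm_nonneg z, norm_nonneg w]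
  intro hc
  have : hin z w = 1 := by linear_combination -hc
  simp [this] at hlt

lemma mobius_eq {z : E} (hz : z ≠ 0) (w : E) :
    mobius z w = (1 - hin w z)⁻¹ •
      ((1 - (1 - (Real.sqrt (1 - ‖z‖ ^ 2) : ℂ)) / ((‖z‖ : ℂ) ^ 2) * hin w z) • z
        - (Real.sqrt (1 - ‖z‖ ^ 2) : ℂ) • w) := by
  rw [mobius, if_neg hz, projLine]
  congr 1
  match_scalars
  · have hA : ((‖z‖ : ℂ) ^ 2) ≠ 0 := by
      simp [pow_eq_zero_iff, Complex.ofReal_eq_zero, norm_eq_zero, hz]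
    field_simp
    ring
  · ring

lemma hin_mobius_left {z : E} (hz : z ≠ 0) {w : E} (ha : 1 - hin w z ≠ 0) :
    hin (mobius z w) z = (((‖z‖ : ℂ) ^ 2) - hin w z) / (1 - hin w z) := by
  rw [mobius_eq hz w]
  have hA : ((‖z‖ : ℂ) ^ 2) ≠ 0 := by
    simp [pow_eq_zero_iff, Complex.ofReal_eq_zero, norm_eq_zero, hz]
  have hA0 : (‖z‖ : ℂ) ≠ 0 := by exact_mod_cast norm_ne_zero_iff.mpr hz
  simp only [hin_smul_left, hin_sub_left, hin_self]
  rw [eq_div_iff ha]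
  field_simp
  ring

lemma mobius_mem_ball {z w : E} (hz1 : ‖z‖ < 1) (hw1 : ‖w‖ < 1) : ‖mobius z w‖ < 1 := by
  by_cases hz : z = 0
  · subst hz; rw [mobius]; simpa using hw1
  have hznn := norm_nonneg z
  have ha : (1 : ℂ) - hin w z ≠ 0 := one_sub_hin_ne_zero hw1 hz1
  set s : ℝ := Real.sqrt (1 - ‖z‖ ^ 2) with hs
  have hs2r : s ^ 2 = 1 - ‖z‖ ^ 2 := Real.sq_sqrt (by nlinarith)
  set a : ℂ := hin w z with hadef
  set φ : E := mobius z w with hφdef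
  have key : hin φ φ * ((1 - a) * (starRingEnd ℂ) (1 - a))
      = (1 - a) * (starRingEnd ℂ) (1 - a)
        - (1 - ((‖z‖ : ℝ) : ℂ) ^ 2) * (1 - ((‖w‖ : ℝ) : ℂ) ^ 2) := by
    have hs2 : ((‖z‖ : ℝ) : ℂ) ^ 2 = 1 - (s : ℂ) ^ 2 := by
      have h' : (‖z‖ : ℝ) ^ 2 = 1 - s ^ 2 := by linarith
      exact_mod_cast congrArg (Complex.ofReal) h'
    have hA' : (1 : ℂ) - (s : ℂ) ^ 2 ≠ 0 := by
      rw [← hs2]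
      simp [pow_eq_zero_iff, Complex.ofReal_eq_zero, norm_eq_zero, hz]
    have ha' : (1 : ℂ) - (starRingEnd ℂ) a ≠ 0 := by
      intro h
      apply ha
      have := congrArg (starRingEnd ℂ) h
      simpa [hadef, conj_hin] using this
    rw [hφdef, mobius_eq hz w]
    simp only [hin_smul_left, hin_smul_right, hin_sub_left, hin_sub_right,
      map_sub, map_one, map_mul, map_div₀, map_inv₀, map_pow, Complex.conj_ofReal]
    rw [hin_self z, hin_self w, ← conj_hin w z, ← hadef]
    rw [hs2]
    field_simp
    ring
  -- convert to a real statement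
  have hreal : (‖φ‖ ^ 2) * Complex.normSq (1 - a)
      = Complex.normSq (1 - a) - (1 - ‖z‖ ^ 2) * (1 - ‖w‖ ^ 2) := by
    have h1 : hin φ φ = ((‖φ‖ : ℝ) : ℂ) ^ 2 := hin_self φ
    have h2 : (1 - a) * (starRingEnd ℂ) (1 - a) = (Complex.normSq (1 - a) : ℂ) :=
      Complex.mul_conj (1 - a)
    rw [h1, h2] at key
    exact_mod_cast key
  have hN : 0 < Complex.normSq (1 - a) := Complex.normSq_pos.2 ha
  have h1 : 0 < 1 - ‖z‖ ^ 2 := by nlinarith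
  have h2 : 0 < 1 - ‖w‖ ^ 2 := by nlinarith [norm_nonneg w]
  have hpos : 0 < (1 - ‖z‖ ^ 2) * (1 - ‖w‖ ^ 2) := mul_pos h1 h2
  have hφ2 : ‖φ‖ ^ 2 < 1 ^ 2 := by nlinarith
  exact lt_of_pow_lt_pow_left₀ 2 (by norm_num) hφ2

lemma mobius_mobius {z w : E} (hz1 : ‖z‖ < 1) (hw1 : ‖w‖ < 1) :
    mobius z (mobius z w) = w := by
  by_cases hz : z = 0
  · subst hz; simp [mobius]
  have hznn := norm_nonneg z
  have ha : (1 : ℂ) - hin w z ≠ 0 := one_sub_hin_ne_zero hw1 hz1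
  set s : ℝ := Real.sqrt (1 - ‖z‖ ^ 2) with hs
  have hs2r : s ^ 2 = 1 - ‖z‖ ^ 2 := Real.sq_sqrt (by nlinarith)
  have hspos : 0 < s := Real.sqrt_pos.2 (by nlinarith)
  have hsne : (s : ℂ) ≠ 0 := by exact_mod_cast hspos.ne'
  have hs2 : ((‖z‖ : ℝ) : ℂ) ^ 2 = 1 - (s : ℂ) ^ 2 := by
    have h' : (‖z‖ : ℝ) ^ 2 = 1 - s ^ 2 := by linarith
    exact_mod_cast congrArg (Complex.ofReal) h'
  have hb : hin (mobius z w) z = (((‖z‖ : ℂ) ^ 2) - hin w z) / (1 - hin w z) :=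
    hin_mobius_left hz ha
  have hA' : (1 : ℂ) - (s : ℂ) ^ 2 ≠ 0 := by
    rw [← hs2]
    simp [pow_eq_zero_iff, Complex.ofReal_eq_zero, norm_eq_zero, hz]
  have hb' : (1 - hin (mobius z w) z)⁻¹ = (1 - hin w z) / (s : ℂ) ^ 2 := by
    rw [hb, hs2]
    rw [show (1 : ℂ) - (1 - (s:ℂ)^2 - hin w z) / (1 - hin w z) = (s:ℂ)^2 / (1 - hin w z) by
      field_simp
      ring]
    rw [inv_div]
  rw [mobius_eq hz (mobius z w), hb', hb, mobius_eq hz w]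
  rw [hs2, ← hs]
  match_scalars
  · field_simp
    ring
  · field_simp

lemma mobius_hasDeriv {z w : E} (hz1 : ‖z‖ < 1) (hw1 : ‖w‖ < 1) :
    ∃ D : E →L[ℂ] E, HasFDerivAt (mobius z) D w ∧
      D (z - w) = -(1 - hin (mobius z w) z) • mobius z w := by
  by_cases hz : z = 0
  · subst hz
    refine ⟨-(ContinuousLinearMap.id ℂ _), ?_, ?_⟩
    · have hmz : mobius (0 : E) = fun u => -u := by funext u; simp [mobius]
      rw [hmz]
      exact (hasFDerivAt_id w).neg
    · simp [mobius, hin_zero_right]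
  · have hznn := norm_nonneg z
    have ha : (1 : ℂ) - hin w z ≠ 0 := one_sub_hin_ne_zero hw1 hz1
    have hs2r : (Real.sqrt (1 - ‖z‖ ^ 2)) ^ 2 = 1 - ‖z‖ ^ 2 := Real.sq_sqrt (by nlinarith)
    have hs2 : ((‖z‖ : ℝ) : ℂ) ^ 2 = 1 - ((Real.sqrt (1 - ‖z‖ ^ 2) : ℝ) : ℂ) ^ 2 := by
      have h' : (‖z‖ : ℝ) ^ 2 = 1 - (Real.sqrt (1 - ‖z‖ ^ 2)) ^ 2 := by linarith
      exact_mod_cast congrArg (Complex.ofReal) h'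
    set T : EuclideanSpace ℂ (Fin n) →L[ℂ] ℂ := innerSL ℂ z with hTdef
    set s : ℂ := ((Real.sqrt (1 - ‖z‖ ^ 2) : ℝ) : ℂ) with hsdef
    set c : ℂ := (1 - s) / ((‖z‖ : ℂ) ^ 2) with hcdef
    have hT : ∀ x : E, T x = hin x z := fun x => by
      rw [hin_eq_inner]; rfl
    have key : mobius z = fun u => ((1 : ℂ) - T u)⁻¹ • (((1 : ℂ) - c * T u) • z - s • u) := by
      funext u
      rw [mobius_eq hz u, hT]
    have haw : (1 : ℂ) - T w ≠ 0 := by rw [hT]; exact ha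
    have h1 : HasFDerivAt (fun u : E => (1 : ℂ) - T u) (-T) w := T.hasFDerivAt.const_sub 1
    have hf : HasFDerivAt (fun u : E => ((1 : ℂ) - T u)⁻¹)
        ((-((((1 : ℂ) - T w) ^ 2)⁻¹)) • (-T)) w := by
      have := (hasDerivAt_inv haw).comp_hasFDerivAt w h1
      simpa [Function.comp_def] using this
    have hβ : HasFDerivAt (fun u : E => (1 : ℂ) - c * T u) (-(c • T)) w :=
      (T.hasFDerivAt.const_mul c).const_sub 1
    have hg : HasFDerivAt (fun u : E => ((1 : ℂ) - c * T u) • z - s • u)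
        ((((1 : ℂ) - c * T w) • (0 : E →L[ℂ] E) + (-(c • T)).smulRight z)
          - s • ContinuousLinearMap.id ℂ _) w :=
      (hβ.smul (hasFDerivAt_const z w)).sub ((hasFDerivAt_id w).const_smul s)
    have hD := hf.smul hg
    rw [show ((fun u : E => ((1 : ℂ) - T u)⁻¹) • fun u : E => ((1 : ℂ) - c * T u) • z - s • u) = mobius z from key.symm] at hD
    refine ⟨_, hD, ?_⟩
    have hA : ((‖z‖ : ℂ) ^ 2) ≠ 0 := by
      simp [pow_eq_zero_iff, Complex.ofReal_eq_zero, norm_eq_zero, hz]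
    have hA' : (1 : ℂ) - s ^ 2 ≠ 0 := by rw [← hs2]; exact hA
    rw [hin_mobius_left hz ha, mobius_eq hz w]
    simp only [ContinuousLinearMap.add_apply, ContinuousLinearMap.coe_smul',
      ContinuousLinearMap.smul_apply, ContinuousLinearMap.smulRight_apply,
      ContinuousLinearMap.neg_apply, ContinuousLinearMap.sub_apply,
      ContinuousLinearMap.zero_apply, ContinuousLinearMap.coe_sub',
      ContinuousLinearMap.id_apply, Pi.smul_apply, Pi.sub_apply]
    simp only [hT, hin_sub_left, hin_self]
    rw [← hsdef, hcdef, hs2]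
    match_scalars
    · simp only [smul_eq_mul]
      field_simp
      ring
    · simp only [smul_eq_mul]
      field_simp
      ring

lemma smul_decomp (d : ℂ) (y : E) :
    d • y = d.re • y + d.im • (Complex.I • y) := by
  ext i
  simp only [PiLp.add_apply, PiLp.smul_apply, Complex.real_smul, smul_eq_mul]
  have hd := Complex.re_add_im d
  linear_combination -(y i) * hd

lemma euclid_decomp (L : EuclideanSpace ℂ (Fin n) →L[ℝ] ℂ) (x : E) :
    L x = ∑ j, (((x j).re : ℂ) * L (EuclideanSpace.single j 1)
      + ((x j).im : ℂ) * L (EuclideanSpace.single j Complex.I)) := by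
  have hsingle : ∀ j : Fin n, EuclideanSpace.single j Complex.I
      = Complex.I • EuclideanSpace.single j (1 : ℂ) := by
    intro j
    ext i
    simp [EuclideanSpace.single_apply, mul_ite]
  have hx : x = ∑ j, (x j) • EuclideanSpace.single j (1 : ℂ) := by
    have h := (EuclideanSpace.basisFun (Fin n) ℂ).sum_repr x
    simp only [EuclideanSpace.basisFun_repr, EuclideanSpace.basisFun_apply] at h
    exact h.symm
  conv_lhs => rw [hx]
  rw [map_sum]
  refine Finset.sum_congr rfl fun j _ => ?_
  rw [smul_decomp (x j) (EuclideanSpace.single j (1 : ℂ)), map_add,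
    ContinuousLinearMap.map_smul, ContinuousLinearMap.map_smul, Complex.real_smul,
    Complex.real_smul, hsingle j]

lemma sum_wdbar_mul (f : EuclideanSpace ℂ (Fin n) → ℂ) (p h : E) :
    ∑ j, wdbar f j p * (starRingEnd ℂ) (h j)
      = (1 / 2 : ℂ) * (fderiv ℝ f p h + Complex.I * fderiv ℝ f p (Complex.I • h)) := by
  rw [euclid_decomp (fderiv ℝ f p) h, euclid_decomp (fderiv ℝ f p) (Complex.I • h)]
  rw [Finset.mul_sum, ← Finset.sum_add_distrib, Finset.mul_sum]
  refine Finset.sum_congr rfl fun j _ => ?_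
  have hIj : (Complex.I • h) j = Complex.I * h j := rfl
  rw [wdbar, hIj]
  have hconj : (starRingEnd ℂ) (h j) = ((h j).re : ℂ) - ((h j).im : ℂ) * Complex.I := by
    rw [Complex.ext_iff]
    simp
  rw [hconj]
  simp only [Complex.mul_re, Complex.mul_im, Complex.I_re, Complex.I_im]
  push_cast
  linear_combination (fderiv ℝ f p (EuclideanSpace.single j Complex.I)) * ((h j).im : ℂ)
    * (-1 / 2) * Complex.I_sq

lemma half_conj_smul (L : EuclideanSpace ℂ (Fin n) →L[ℝ] ℂ) (c : ℂ) (x : E) :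
    (1 / 2 : ℂ) * (L (c • x) + Complex.I * L (Complex.I • (c • x)))
      = (starRingEnd ℂ) c * ((1 / 2 : ℂ) * (L x + Complex.I * L (Complex.I • x))) := by
  have hd : ∀ (d : ℂ) (y : E), L (d • y)
      = (d.re : ℂ) * L y + (d.im : ℂ) * L (Complex.I • y) := by
    intro d y
    rw [smul_decomp d y, map_add, ContinuousLinearMap.map_smul, ContinuousLinearMap.map_smul,
      Complex.real_smul, Complex.real_smul]
  have h2 : Complex.I • (c • x) = (Complex.I * c) • x := smul_smul _ _ _
  rw [hd c x, h2, hd (Complex.I * c) x]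
  have hconj : (starRingEnd ℂ) c = (c.re : ℂ) - (c.im : ℂ) * Complex.I := by
    rw [Complex.ext_iff]
    simp
  rw [hconj]
  simp only [Complex.mul_re, Complex.mul_im, Complex.I_re, Complex.I_im]
  push_cast
  linear_combination (1 / 2 : ℂ) * (c.im : ℂ) * L (Complex.I • x) * Complex.I_sq

end Aux

theorem stmt17 (n : ℕ) (hn : 1 ≤ n) (v : EuclideanSpace ℂ (Fin n) → ℂ)
    (hv : ContDiffOn ℝ 1 v (Metric.ball 0 1))
    (z ζ : EuclideanSpace ℂ (Fin n))
    (hz : z ∈ Metric.ball (0 : EuclideanSpace ℂ (Fin n)) 1)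
    (hζ : ζ ∈ Metric.ball (0 : EuclideanSpace ℂ (Fin n)) 1) :
    (∑ j, wdbar v j ζ * (starRingEnd ℂ) (ζ j))
      = -(1 - hin z ζ)⁻¹ *
          ∑ j, wdbar (v ∘ mobius z) j (mobius z ζ) *
            (starRingEnd ℂ) (z j - mobius z ζ j) := by
  have hz1 : ‖z‖ < 1 := by simpa using hz
  have hζ1 : ‖ζ‖ < 1 := by simpa using hζ
  set w : EuclideanSpace ℂ (Fin n) := mobius z ζ with hwdef
  have hw1 : ‖w‖ < 1 := mobius_mem_ball hz1 hζ1
  have hinv : mobius z w = ζ := mobius_mobius hz1 hζ1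
  obtain ⟨D, hD, hDval⟩ := mobius_hasDeriv (w := w) hz1 hw1
  rw [hinv] at hDval
  -- differentiability of v at ζ
  have hdiff : DifferentiableAt ℝ v ζ :=
    (hv.differentiableOn one_ne_zero).differentiableAt (Metric.isOpen_ball.mem_nhds hζ)
  set L : EuclideanSpace ℂ (Fin n) →L[ℝ] ℂ := fderiv ℝ v ζ with hLdef
  have hL : HasFDerivAt v L ζ := hdiff.hasFDerivAt
  have hcomp : HasFDerivAt (v ∘ mobius z) (L.comp (D.restrictScalars ℝ)) w := by
    have hL' : HasFDerivAt v L (mobius z w) := by rw [hinv]; exact hL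
    exact hL'.comp w (hD.restrictScalars ℝ)
  have hfd : fderiv ℝ (v ∘ mobius z) w = L.comp (D.restrictScalars ℝ) := hcomp.fderiv
  have hrhs : ∑ j, wdbar (v ∘ mobius z) j w * (starRingEnd ℂ) (z j - w j)
      = (1 / 2 : ℂ) * (L (D (z - w)) + Complex.I * L (Complex.I • D (z - w))) := by
    have := sum_wdbar_mul (v ∘ mobius z) w (z - w)
    rw [hfd] at this
    simp only [ContinuousLinearMap.coe_comp', Function.comp_apply,
      ContinuousLinearMap.coe_restrictScalars'] at this
    simp only [PiLp.sub_apply] at this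
    rw [this]
    congr 2
    rw [ContinuousLinearMap.map_smul]
  rw [hrhs, hDval, half_conj_smul]
  have hconjc : (starRingEnd ℂ) (-(1 - hin ζ z)) = -(1 - hin z ζ) := by
    rw [map_neg, map_sub, map_one, conj_hin]
  rw [hconjc]
  have hne : (1 : ℂ) - hin z ζ ≠ 0 := one_sub_hin_ne_zero hz1 hζ1
  rw [sum_wdbar_mul v ζ ζ, ← hLdef]
  field_simp
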